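/- (Theorem 1.) Suppose ϑ ≥ ρ₁μ/n. Let k ∈ ℕ, let β ∈ ℝ^p satisfy ‖β‖₀ ≤ k, and let β⁺ be a minimizer of γ ↦ h(γ; β) over the set {γ ∈ ℝ^p : ‖γ‖₀ ≤ k}. Then ℓ(β⁺) ≤ ℓ(β). -/

import Mathlib

open scoped BigOperators RealInnerProductSpace

noncomputable section

/-- Second-order Taylor-type bound for a function with second derivative bounded by `μ`. -/
lemma taylor_quad_bound {b : ℝ → ℝ} {μ : ℝ} (hμ : 0 ≤ μ) (hb : ContDiff ℝ 2 b)
    (hb'' : ∀ θ : ℝ, |deriv (deriv b) θ| ≤ μ) (a c : ℝ) :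
    b (a + c) - b a - deriv b a * c ≤ μ / 2 * c ^ 2 := by
  have hbd : Differentiable ℝ b := hb.differentiable (by norm_num)
  have hb1 : ContDiff ℝ (1 + 1) b := by norm_num at hb ⊢; exact hb
  have hbd' : Differentiable ℝ (deriv b) :=
    ((contDiff_succ_iff_deriv.mp hb1).2.2).differentiable one_ne_zero
  have lip : LipschitzWith μ.toNNReal (deriv b) := by
    apply lipschitzWith_of_nnnorm_deriv_le hbd'
    intro x
    rw [← NNReal.coe_le_coe]
    simpa [Real.norm_eq_abs, Real.coe_toNNReal _ hμ] using hb'' x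
  set F : ℝ → ℝ := fun t => b (a + t * c) - deriv b a * c * t - μ * c ^ 2 / 2 * t ^ 2 with hF
  have hFd : ∀ t : ℝ, HasDerivAt F
      (deriv b (a + t * c) * c - deriv b a * c - μ * c ^ 2 * t) t := by
    intro t
    have h1 : HasDerivAt (fun t : ℝ => a + t * c) c t := by
      simpa using ((hasDerivAt_id t).mul_const c).const_add a
    have h2 : HasDerivAt (fun t : ℝ => b (a + t * c)) (deriv b (a + t * c) * c) t :=
      (hbd (a + t * c)).hasDerivAt.comp t h1
    have h3 : HasDerivAt (fun t : ℝ => deriv b a * c * t) (deriv b a * c) t := by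
      simpa using (hasDerivAt_id t).const_mul (deriv b a * c)
    have h4 : HasDerivAt (fun t : ℝ => μ * c ^ 2 / 2 * t ^ 2) (μ * c ^ 2 * t) t := by
      have := (hasDerivAt_pow 2 t).const_mul (μ * c ^ 2 / 2)
      exact this.congr_deriv (by norm_num; ring)
    exact (h2.sub h3).sub h4
  have hanti : AntitoneOn F (Set.Icc (0:ℝ) 1) := by
    apply antitoneOn_of_deriv_nonpos (convex_Icc 0 1)
    · exact (fun t _ => ((hFd t).differentiableAt).continuousAt.continuousWithinAt)
    · exact fun t _ => ((hFd t).differentiableAt).differentiableWithinAt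
    · intro t ht
      rw [interior_Icc] at ht
      rw [(hFd t).deriv]
      have habs : |deriv b (a + t * c) - deriv b a| ≤ μ * |t * c| := by
        have := lip.dist_le_mul (a + t * c) a
        simpa [Real.dist_eq, Real.coe_toNNReal _ hμ, abs_sub_comm, abs_mul] using this
      have h5 : c * (deriv b (a + t * c) - deriv b a) ≤ μ * t * c ^ 2 := by
        calc c * (deriv b (a + t * c) - deriv b a)
            ≤ |c * (deriv b (a + t * c) - deriv b a)| := le_abs_self _
          _ = |c| * |deriv b (a + t * c) - deriv b a| := abs_mul _ _
          _ ≤ |c| * (μ * |t * c|) := by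
              exact mul_le_mul_of_nonneg_left habs (abs_nonneg _)
          _ = μ * t * c ^ 2 := by
              rw [abs_mul, abs_of_pos ht.1, ← sq_abs c]; ring
      nlinarith [h5]
  have h01 := hanti (Set.left_mem_Icc.mpr zero_le_one) (Set.right_mem_Icc.mpr zero_le_one)
    zero_le_one
  simp only [hF] at h01
  norm_num at h01
  linarith

/-- A quadratic form of a Hermitian matrix is bounded by its largest eigenvalue. -/
lemma quadForm_le_max_eig {p : ℕ} (A : Matrix (Fin p) (Fin p) ℝ) (hA : A.IsHermitian) (ρ : ℝ)
    (h : ∀ i, hA.eigenvalues i ≤ ρ) (x : Fin p → ℝ) :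
    dotProduct x (A.mulVec x) ≤ ρ * dotProduct x x := by
  classical
  set U : Matrix (Fin p) (Fin p) ℝ := (hA.eigenvectorUnitary : Matrix (Fin p) (Fin p) ℝ) with hU
  set w : Fin p → ℝ := Matrix.mulVec (star U) x with hw
  have hxU : Matrix.vecMul x U = w := by
    rw [hw, Matrix.star_eq_conjTranspose, Matrix.conjTranspose_eq_transpose_of_trivial,
      Matrix.mulVec_transpose]
  have hUU : U * star U = 1 := (Matrix.mem_unitaryGroup_iff).mp (hA.eigenvectorUnitary).2
  have hdot : dotProduct x x = dotProduct w w := by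
    rw [hw]
    calc dotProduct x x = dotProduct x ((U * star U).mulVec x) := by
          rw [hUU, Matrix.one_mulVec]
      _ = dotProduct (Matrix.vecMul x U) (Matrix.mulVec (star U) x) := by
          rw [← Matrix.mulVec_mulVec, Matrix.dotProduct_mulVec]
      _ = dotProduct (Matrix.mulVec (star U) x) (Matrix.mulVec (star U) x) := by
          rw [hxU]
  have hquad : dotProduct x (A.mulVec x) = ∑ i, hA.eigenvalues i * w i ^ 2 := by
    conv_lhs => rw [hA.spectral_theorem, Unitary.conjStarAlgAut_apply]
    rw [← Matrix.mulVec_mulVec, Matrix.dotProduct_mulVec, ← Matrix.vecMul_vecMul, hxU, ← hw]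
    simp [dotProduct, Matrix.vecMul_diagonal]
    exact Finset.sum_congr rfl fun i _ => by ring
  rw [hquad, hdot]
  have : ∀ i ∈ Finset.univ, hA.eigenvalues i * w i ^ 2 ≤ ρ * w i ^ 2 := fun i _ =>
    mul_le_mul_of_nonneg_right (h i) (sq_nonneg _)
  calc ∑ i, hA.eigenvalues i * w i ^ 2 ≤ ∑ i, ρ * w i ^ 2 := Finset.sum_le_sum this
    _ = ρ * dotProduct w w := by rw [← Finset.mul_sum]; simp [dotProduct, sq]

/-- GLM negative log-likelihood `L(β) = (1/n) ∑ⱼ [b(Xⱼᵀβ) − yⱼ Xⱼᵀβ]`. -/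
def glmLoss {n p : ℕ} (X : Fin n → EuclideanSpace ℝ (Fin p)) (y : Fin n → ℝ)
    (b : ℝ → ℝ) (β : EuclideanSpace ℝ (Fin p)) : ℝ :=
  (1 / (n : ℝ)) * ∑ j, (b ⟪X j, β⟫ - y j * ⟪X j, β⟫)

/-- Surrogate loss `ℓ(β) = L(β) − βᵀv`. -/
def surrLoss {n p : ℕ} (X : Fin n → EuclideanSpace ℝ (Fin p)) (y : Fin n → ℝ)
    (b : ℝ → ℝ) (v : EuclideanSpace ℝ (Fin p)) (β : EuclideanSpace ℝ (Fin p)) : ℝ :=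
  glmLoss X y b β - ⟪β, v⟫

/-- Gradient of the surrogate loss:
`∇ℓ(β) = (1/n) ∑ⱼ (b'(Xⱼᵀβ) − yⱼ) Xⱼ − v`. -/
def surrGrad {n p : ℕ} (X : Fin n → EuclideanSpace ℝ (Fin p)) (y : Fin n → ℝ)
    (b : ℝ → ℝ) (v : EuclideanSpace ℝ (Fin p)) (β : EuclideanSpace ℝ (Fin p)) :
    EuclideanSpace ℝ (Fin p) :=
  (1 / (n : ℝ)) • (∑ j, (deriv b ⟪X j, β⟫ - y j) • X j) - v

/-- Quadratic approximation `h(γ; β) = ℓ(β) + ⟨γ − β, ∇ℓ(β)⟩ + (ϑ/2)‖γ − β‖₂²`. -/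
def quadApprox {n p : ℕ} (X : Fin n → EuclideanSpace ℝ (Fin p)) (y : Fin n → ℝ)
    (b : ℝ → ℝ) (v : EuclideanSpace ℝ (Fin p)) (ϑ : ℝ)
    (γ β : EuclideanSpace ℝ (Fin p)) : ℝ :=
  surrLoss X y b v β + ⟪γ - β, surrGrad X y b v β⟫ + ϑ / 2 * ‖γ - β‖ ^ 2

/-- The ℓ₀ "norm": number of nonzero coordinates. -/
def normZero {p : ℕ} (β : EuclideanSpace ℝ (Fin p)) : ℕ :=
  {j | β j ≠ 0}.ncard

/-- Theorem 1 of the paper: one step of sparsity-restricted minimization of the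
quadratic approximation does not increase the surrogate loss, provided `ϑ ≥ ρ₁ μ / n`. -/
theorem surrLoss_decrease
    {n p : ℕ} (hn : 0 < n)
    (X : Fin n → EuclideanSpace ℝ (Fin p)) (y : Fin n → ℝ)
    (b : ℝ → ℝ) (μ : ℝ) (hμ : 0 < μ) (hb : ContDiff ℝ 2 b)
    (hb'' : ∀ θ : ℝ, 0 ≤ deriv (deriv b) θ ∧ deriv (deriv b) θ ≤ μ)
    (v : EuclideanSpace ℝ (Fin p))
    (ρ₁ : ℝ)
    (hρ₁ : IsGreatest
      (Set.range (Matrix.isHermitian_conjTranspose_mul_self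
        (Matrix.of fun j i => X j i : Matrix (Fin n) (Fin p) ℝ)).eigenvalues) ρ₁)
    (ϑ : ℝ) (hϑpos : 0 < ϑ) (hϑ : ρ₁ * μ / n ≤ ϑ)
    (k : ℕ) (β βplus : EuclideanSpace ℝ (Fin p))
    (hβ : normZero β ≤ k)
    (hβplus : normZero βplus ≤ k)
    (hmin : ∀ γ : EuclideanSpace ℝ (Fin p), normZero γ ≤ k →
      quadApprox X y b v ϑ βplus β ≤ quadApprox X y b v ϑ γ β) :
    surrLoss X y b v βplus ≤ surrLoss X y b v β := by
  classical
  set M : Matrix (Fin n) (Fin p) ℝ := (Matrix.of fun j i => X j i) with hM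
  set d : EuclideanSpace ℝ (Fin p) := βplus - β with hd
  set a : Fin n → ℝ := fun j => ⟪X j, β⟫ with ha
  set c : Fin n → ℝ := fun j => ⟪X j, d⟫ with hc
  have ha' : ∀ j, ⟪X j, β⟫ = a j := fun _ => rfl
  have hc' : ∀ j, ⟪X j, d⟫ = c j := fun _ => rfl
  have hba : ∀ j, ⟪X j, βplus⟫ = a j + c j := by
    intro j
    have h0 := inner_sub_right (𝕜 := ℝ) (X j) βplus β
    rw [← hd, hc'] at h0
    linarith [ha' j]
  have hdX : ∀ j, ⟪d, X j⟫ = c j := fun j => by rw [real_inner_comm, hc']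
  have h1 : ⟪d, surrGrad X y b v β⟫
      = (1 / (n : ℝ)) * ∑ j, (deriv b (a j) - y j) * c j - ⟪d, v⟫ := by
    simp only [surrGrad, inner_sub_right, real_inner_smul_right, inner_sum,
      real_inner_smul_left, real_inner_smul_right, hdX, ha']
  have hv : ⟪βplus, v⟫ = ⟪β, v⟫ + ⟪d, v⟫ := by
    have := inner_sub_left (𝕜 := ℝ) βplus β v
    rw [← hd] at this
    linarith
  have key : surrLoss X y b v βplus = surrLoss X y b v β + ⟪d, surrGrad X y b v β⟫
      + (1 / (n : ℝ)) * ∑ j, (b (a j + c j) - b (a j) - deriv b (a j) * c j) := by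
    rw [h1]
    simp only [surrLoss, glmLoss, hba, hv, ha']
    have hS : ∑ j, (b (a j + c j) - y j * (a j + c j))
        = ∑ j, (b (a j) - y j * a j) + ∑ j, (deriv b (a j) - y j) * c j
          + ∑ j, (b (a j + c j) - b (a j) - deriv b (a j) * c j) := by
      rw [← Finset.sum_add_distrib, ← Finset.sum_add_distrib]
      exact Finset.sum_congr rfl fun j _ => by ring
    linear_combination (1 / (n : ℝ)) * hS
  have habs : ∀ θ : ℝ, |deriv (deriv b) θ| ≤ μ := fun θ =>
    abs_le.mpr ⟨by linarith [(hb'' θ).1], (hb'' θ).2⟩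
  have hterm : ∀ j, b (a j + c j) - b (a j) - deriv b (a j) * c j ≤ μ / 2 * c j ^ 2 :=
    fun j => taylor_quad_bound hμ.le hb habs (a j) (c j)
  have hcM : ∀ j, c j = M.mulVec (fun i => d i) j := by
    intro j
    simp [hc, hM, Matrix.mulVec, dotProduct, PiLp.inner_apply, RCLike.inner_apply,
      conj_trivial]
    exact Finset.sum_congr rfl fun _ _ => mul_comm _ _
  have hnormd : dotProduct (fun i => d i) (fun i => d i) = ‖d‖ ^ 2 := by
    rw [← real_inner_self_eq_norm_sq]
    simp [dotProduct, PiLp.inner_apply, RCLike.inner_apply, conj_trivial]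
    rw [EuclideanSpace.norm_eq, Real.sq_sqrt (by positivity)]
    simp [sq]
  have hsumc : ∑ j, c j ^ 2 ≤ ρ₁ * ‖d‖ ^ 2 := by
    have hq := quadForm_le_max_eig (M.conjTranspose * M) (Matrix.isHermitian_conjTranspose_mul_self M)
      ρ₁ (fun i => hρ₁.2 ⟨i, rfl⟩) (fun i => d i)
    rw [hnormd] at hq
    refine le_trans (le_of_eq ?_) hq
    rw [← Matrix.mulVec_mulVec, Matrix.dotProduct_mulVec,
      Matrix.conjTranspose_eq_transpose_of_trivial, Matrix.vecMul_transpose]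
    simp only [dotProduct]
    exact Finset.sum_congr rfl fun j _ => by rw [hcM j]; ring
  have hnR : (0:ℝ) < n := by exact_mod_cast hn
  have hR : (1 / (n : ℝ)) * ∑ j, (b (a j + c j) - b (a j) - deriv b (a j) * c j)
      ≤ ϑ / 2 * ‖d‖ ^ 2 := by
    have h6 : ∑ j, (b (a j + c j) - b (a j) - deriv b (a j) * c j)
        ≤ μ / 2 * (ρ₁ * ‖d‖ ^ 2) := by
      calc ∑ j, (b (a j + c j) - b (a j) - deriv b (a j) * c j)
          ≤ ∑ j, μ / 2 * c j ^ 2 := Finset.sum_le_sum fun j _ => hterm j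
        _ = μ / 2 * ∑ j, c j ^ 2 := by rw [Finset.mul_sum]
        _ ≤ μ / 2 * (ρ₁ * ‖d‖ ^ 2) := mul_le_mul_of_nonneg_left hsumc (by linarith)
    calc (1 / (n : ℝ)) * ∑ j, (b (a j + c j) - b (a j) - deriv b (a j) * c j)
        ≤ (1 / (n : ℝ)) * (μ / 2 * (ρ₁ * ‖d‖ ^ 2)) :=
          mul_le_mul_of_nonneg_left h6 (by positivity)
      _ = (ρ₁ * μ / n) / 2 * ‖d‖ ^ 2 := by field_simp
      _ ≤ ϑ / 2 * ‖d‖ ^ 2 := by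
          apply mul_le_mul_of_nonneg_right _ (sq_nonneg _)
          linarith
  have hmb := hmin β hβ
  have hqb : quadApprox X y b v ϑ β β = surrLoss X y b v β := by
    simp [quadApprox]
  have hqp : quadApprox X y b v ϑ βplus β
      = surrLoss X y b v β + ⟪d, surrGrad X y b v β⟫ + ϑ / 2 * ‖d‖ ^ 2 := by
    rw [quadApprox, ← hd]
  rw [hqb, hqp] at hmb
  linarith [key, hR, hmb]
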